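/- Let (T,v) be a geodesically complete rooted tree. Then h(T) > 0 if and only if (T,v) is pseudo-regular. Furthermore, if (T,v) is K-pseudo-regular, then h(T) ≥ 1/(7K). -/

import Mathlib

open scoped ENNReal

namespace TreePaper

variable {V : Type*}

/-- The (outer) vertex boundary `∂A = {w : d(w,A) = 1}` of a set of vertices. -/
def vboundary (G : SimpleGraph V) (A : Set V) : Set V :=
  {w | w ∉ A ∧ ∃ a ∈ A, G.Adj w a}

/-- The ratio `|∂A| / |A|`, valued in `ℝ≥0∞`. -/
noncomputable def eratio (G : SimpleGraph V) (A : Finset V) : ℝ≥0∞ :=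
  ((vboundary G (A : Set V)).encard : ℝ≥0∞) / (A.card : ℝ≥0∞)

/-- The Cheeger isoperimetric constant `h(Γ) = inf_A |∂A|/|A|`, the infimum over all
non-empty finite subsets of vertices. -/
noncomputable def cheeger (G : SimpleGraph V) : ℝ≥0∞ :=
  ⨅ (A : Finset V) (_ : A.Nonempty), eratio G A

/-- A (combinatorial) geodesic ray emanating from `v`. -/
def IsRay (G : SimpleGraph V) (v : V) (F : ℕ → V) : Prop :=
  F 0 = v ∧ ∀ m n : ℕ, G.dist (F m) (F n) = Nat.dist m n

/-- A rooted tree is geodesically complete iff every vertex `x ≠ v` lies on a geodesic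
ray from the root. -/
def GeodComplete (G : SimpleGraph V) (v : V) : Prop :=
  ∀ x : V, x ≠ v → ∃ F : ℕ → V, IsRay G v F ∧ ∃ n : ℕ, F n = x

/-- `m` lies on the geodesic `[x y]`. -/
def Btw (G : SimpleGraph V) (x m y : V) : Prop :=
  G.dist x m + G.dist m y = G.dist x y

/-- `(T,v)` is `K`-pseudo-regular. -/
def KPseudoRegular (G : SimpleGraph V) (v : V) (K : ℕ) : Prop :=
  ∀ a : V, ∃ y₁ y₂ : V, y₁ ≠ y₂ ∧
    G.dist v y₁ = G.dist v a + K ∧ Btw G v a y₁ ∧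
    G.dist v y₂ = G.dist v a + K ∧ Btw G v a y₂

section Tree

open SimpleGraph

variable {G : SimpleGraph V} {v : V}

private lemma exists_geo (hc : G.Connected) (u w : V) :
    ∃ p : G.Walk u w, p.IsPath ∧ p.length = G.dist u w := by
  haveI := Classical.decEq V
  obtain ⟨p, hp⟩ := hc.exists_walk_length_eq_dist u w
  exact ⟨p.bypass, p.bypass_isPath,
    le_antisymm (hp ▸ p.length_bypass_le) (SimpleGraph.dist_le _)⟩

private lemma dist_split (hc : G.Connected) {u w z : V} {p : G.Walk u w}
    (hlen : p.length = G.dist u w) (hz : z ∈ p.support) :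
    G.dist u z + G.dist z w = G.dist u w := by
  haveI := Classical.decEq V
  have hspec := p.take_spec hz
  have h1 : G.dist u z ≤ (p.takeUntil z hz).length := SimpleGraph.dist_le _
  have h2 : G.dist z w ≤ (p.dropUntil z hz).length := SimpleGraph.dist_le _
  have h3 : (p.takeUntil z hz).length + (p.dropUntil z hz).length = p.length := by
    conv_rhs => rw [← hspec]
    exact (SimpleGraph.Walk.length_append _ _).symm
  have h4 := hc.dist_triangle (u := u) (v := z) (w := w)
  omega

private lemma exists_parent (hc : G.Connected) {z w : V} (h : 0 < G.dist z w) :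
    ∃ p : V, G.Adj p w ∧ G.dist z p + 1 = G.dist z w := by
  obtain ⟨q, hq⟩ := hc.exists_walk_length_eq_dist w z
  cases q with
  | nil =>
      rw [SimpleGraph.dist_comm] at h
      simp at hq; rw [SimpleGraph.dist_self] at h; omega
  | cons hadj q' =>
      rename_i b
      refine ⟨b, hadj.symm, ?_⟩
      have h1 : G.dist z b ≤ q'.length := by
        rw [SimpleGraph.dist_comm]; exact SimpleGraph.dist_le q'
      have h2 : G.dist z w ≤ G.dist z b + G.dist b w := hc.dist_triangle
      have h3 : G.dist b w = 1 := SimpleGraph.dist_eq_one_iff_adj.mpr hadj.symm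
      have h4 : q'.length + 1 = G.dist w z := by
        simpa [SimpleGraph.Walk.length_cons] using hq
      rw [SimpleGraph.dist_comm] at h4
      omega

private lemma adj_levels (hT : G.IsTree) (v : V) {x y : V} (h : G.Adj x y) :
    G.dist v x + 1 = G.dist v y ∨ G.dist v y + 1 = G.dist v x := by
  have hc := hT.isConnected
  have hxy : G.dist x y = 1 := SimpleGraph.dist_eq_one_iff_adj.mpr h
  have hyx : G.dist y x = 1 := SimpleGraph.dist_eq_one_iff_adj.mpr h.symm
  have t1 : G.dist v y ≤ G.dist v x + 1 := by
    have := hc.dist_triangle (u := v) (v := x) (w := y); omega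
  have t2 : G.dist v x ≤ G.dist v y + 1 := by
    have := hc.dist_triangle (u := v) (v := y) (w := x); omega
  have hne : G.dist v x ≠ G.dist v y := by
    intro he
    obtain ⟨P, hP, hPl⟩ := exists_geo hc x v
    have hy : y ∉ P.support := by
      intro hy
      have := dist_split hc hPl hy
      have e1 : G.dist x v = G.dist v x := SimpleGraph.dist_comm ..
      have e2 : G.dist y v = G.dist v y := SimpleGraph.dist_comm ..
      omega
    have hQ' : (SimpleGraph.Walk.cons h.symm P).IsPath :=
      (SimpleGraph.Walk.cons_isPath_iff _ _).mpr ⟨hP, hy⟩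
    obtain ⟨Q, hQ, hQl⟩ := exists_geo hc y v
    have heq := (hT.existsUnique_path y v).unique hQ hQ'
    have hlen : Q.length = (SimpleGraph.Walk.cons h.symm P).length := by rw [heq]
    rw [SimpleGraph.Walk.length_cons, hPl, hQl] at hlen
    have e1 : G.dist x v = G.dist v x := SimpleGraph.dist_comm ..
    have e2 : G.dist y v = G.dist v y := SimpleGraph.dist_comm ..
    omega
  omega

private lemma parent_unique (hT : G.IsTree) {v x p₁ p₂ : V} (h1 : G.Adj p₁ x) (h2 : G.Adj p₂ x)
    (e1 : G.dist v p₁ + 1 = G.dist v x) (e2 : G.dist v p₂ + 1 = G.dist v x) : p₁ = p₂ := by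
  have hc := hT.isConnected
  obtain ⟨P₁, hP₁, hP₁l⟩ := exists_geo hc p₁ v
  obtain ⟨P₂, hP₂, hP₂l⟩ := exists_geo hc p₂ v
  have hx1 : x ∉ P₁.support := by
    intro hx
    have := dist_split hc hP₁l hx
    have e3 : G.dist p₁ v = G.dist v p₁ := SimpleGraph.dist_comm ..
    have e4 : G.dist x v = G.dist v x := SimpleGraph.dist_comm ..
    have e5 : 0 < G.dist p₁ x := hc.pos_dist_of_ne h1.ne
    omega
  have hx2 : x ∉ P₂.support := by
    intro hx
    have := dist_split hc hP₂l hx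
    have e3 : G.dist p₂ v = G.dist v p₂ := SimpleGraph.dist_comm ..
    have e4 : G.dist x v = G.dist v x := SimpleGraph.dist_comm ..
    have e5 : 0 < G.dist p₂ x := hc.pos_dist_of_ne h2.ne
    omega
  have hQ1 : (SimpleGraph.Walk.cons h1.symm P₁).IsPath :=
    (SimpleGraph.Walk.cons_isPath_iff _ _).mpr ⟨hP₁, hx1⟩
  have hQ2 : (SimpleGraph.Walk.cons h2.symm P₂).IsPath :=
    (SimpleGraph.Walk.cons_isPath_iff _ _).mpr ⟨hP₂, hx2⟩
  have heq := (hT.existsUnique_path x v).unique hQ1 hQ2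
  have hs := congrArg SimpleGraph.Walk.support heq
  rw [SimpleGraph.Walk.support_cons, SimpleGraph.Walk.support_cons,
    P₁.support_eq_cons, P₂.support_eq_cons] at hs
  simp only [List.cons.injEq] at hs
  exact hs.2.1

private lemma btw_refl_right (hc : G.Connected) (a b : V) (h : Btw G v a b) :
    Btw G v b b := by
  unfold Btw at *
  simp [SimpleGraph.dist_self]

private lemma btw_trans (hc : G.Connected) {a z b : V}
    (h1 : Btw G v a z) (h2 : Btw G v z b) : Btw G v a b := by
  unfold Btw at *
  have t1 : G.dist a b ≤ G.dist a z + G.dist z b := hc.dist_triangle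
  have t2 : G.dist v b ≤ G.dist v a + G.dist a b := hc.dist_triangle
  omega

/-- If `u` is on the segment `[a,b]` and `a, b` are root-aligned, then `u` is below `a`
and above `b`. -/
private lemma btw_mid (hc : G.Connected) {a u b : V} (hab : Btw G v a b)
    (hu : Btw G a u b) : Btw G v a u ∧ Btw G v u b := by
  unfold Btw at *
  have t1 : G.dist v u ≤ G.dist v a + G.dist a u := hc.dist_triangle
  have t2 : G.dist v b ≤ G.dist v u + G.dist u b := hc.dist_triangle
  omega

/-- Ancestors of a common vertex form a chain. -/
private lemma ancestor_chain (hT : G.IsTree) (v : V) :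
    ∀ n : ℕ, ∀ b z u : V, G.dist v b ≤ n → Btw G v z b → Btw G v u b →
      G.dist v u ≤ G.dist v z → Btw G v u z := by
  have hc := hT.isConnected
  intro n
  induction n with
  | zero =>
      intro b z u hb hzb hub hl
      unfold Btw at *
      have hz : z = b := (hc.dist_eq_zero_iff).mp (by omega)
      subst hz; omega
  | succ n ih =>
      intro b z u hb hzb hub hl
      by_cases hzb' : z = b
      · subst hzb'; exact hub
      · have hdzb : 0 < G.dist z b := hc.pos_dist_of_ne hzb'
        have hdub : 0 < G.dist u b := by
          have : u ≠ b := by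
            intro h; subst h
            unfold Btw at *; omega
          exact hc.pos_dist_of_ne this
        obtain ⟨p, hp, hpd⟩ := exists_parent hc hdzb
        obtain ⟨q, hq, hqd⟩ := exists_parent hc hdub
        have hpb : G.dist p b = 1 := SimpleGraph.dist_eq_one_iff_adj.mpr hp
        have hqb : G.dist q b = 1 := SimpleGraph.dist_eq_one_iff_adj.mpr hq
        have hpl : G.dist v p + 1 = G.dist v b := by
          have t1 : G.dist v p ≤ G.dist v z + G.dist z p := hc.dist_triangle
          have t2 : G.dist v b ≤ G.dist v p + G.dist p b := hc.dist_triangle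
          unfold Btw at hzb; omega
        have hql : G.dist v q + 1 = G.dist v b := by
          have t1 : G.dist v q ≤ G.dist v u + G.dist u q := hc.dist_triangle
          have t2 : G.dist v b ≤ G.dist v q + G.dist q b := hc.dist_triangle
          unfold Btw at hub; omega
        have hpq : p = q := parent_unique hT hp hq hpl hql
        subst hpq
        have hzp : Btw G v z p := by
          unfold Btw at *; omega
        have hup : Btw G v u p := by
          unfold Btw at *
          have t1 : G.dist v p ≤ G.dist v u + G.dist u p := hc.dist_triangle
          have t2 : G.dist u b ≤ G.dist u p + G.dist p b := hc.dist_triangle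
          omega
        exact ih p z u (by omega) hzp hup hl

/-- Two ancestors of `b` at the same level coincide. -/
private lemma ancestor_eq (hT : G.IsTree) {v b z u : V} (hzb : Btw G v z b)
    (hub : Btw G v u b) (hl : G.dist v u = G.dist v z) : u = z := by
  have hc := hT.isConnected
  have h1 := ancestor_chain hT v (G.dist v b) b z u le_rfl hzb hub hl.le
  unfold Btw at *
  exact (hc.dist_eq_zero_iff).mp (by omega)

/-- A point of `[a,b]` is on `[a,y]` or on `[y,b]`, when `y ∈ [a,b]` (root-aligned). -/
private lemma seg_split (hT : G.IsTree) {v a y b u : V} (hay : Btw G v a y)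
    (hyb : Btw G v y b) (hu : Btw G a u b) : Btw G a u y ∨ Btw G y u b := by
  have hc := hT.isConnected
  have hab : Btw G v a b := btw_trans hc hay hyb
  obtain ⟨hau, hub⟩ := btw_mid hc hab hu
  rcases le_or_gt (G.dist v u) (G.dist v y) with hle | hlt
  · left
    have := ancestor_chain hT v (G.dist v b) b y u le_rfl hyb ((btw_mid hc hab hu).2) hle
    unfold Btw at *; omega
  · right
    have := ancestor_chain hT v (G.dist v b) b u y le_rfl ((btw_mid hc hab hu).2) hyb hlt.le
    unfold Btw at *; omega

end Tree

section Main

open SimpleGraph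

variable {G : SimpleGraph V} {v : V}

/-- The "exit" condition: `b ∉ A` lies below `a ∈ A` and the segment `[a,b)` is inside `A`. -/
private def Cond (G : SimpleGraph V) (v : V) (A : Finset V) (a b : V) : Prop :=
  a ∈ A ∧ b ∉ A ∧ Btw G v a b ∧ b ≠ a ∧ ∀ u : V, Btw G a u b → u ≠ b → u ∈ A

open Classical in
private noncomputable def wgt (G : SimpleGraph V) (v : V) (A : Finset V) (K : ℕ)
    (a b : V) : ℝ :=
  if Cond G v A a b then (2:ℝ)⁻¹ ^ ((G.dist a b - 1) / K + 1) else 0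

private lemma wgt_nonneg {A : Finset V} {K : ℕ} (a b : V) : 0 ≤ wgt G v A K a b := by
  unfold wgt
  split <;> positivity

private lemma arith_block (K : ℕ) (hK : 1 ≤ K) :
    ∀ M : ℕ, (∑ i ∈ Finset.range (M * K), ((2:ℝ)⁻¹) ^ (i / K + 1))
      ≤ K * (1 - (2:ℝ)⁻¹ ^ M) := by
  intro M
  induction M with
  | zero => simp
  | succ M ih =>
      rw [Finset.range_eq_Ico] at ih ⊢
      rw [← Finset.sum_Ico_consecutive _ (Nat.zero_le (M * K))
        (Nat.mul_le_mul_right K (Nat.le_succ M))]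
      have hblock : (∑ i ∈ Finset.Ico (M * K) ((M + 1) * K), ((2:ℝ)⁻¹) ^ (i / K + 1))
          = K * (2:ℝ)⁻¹ ^ (M + 1) := by
        rw [Finset.sum_congr rfl (g := fun _ => ((2:ℝ)⁻¹) ^ (M + 1)) ?_]
        · rw [Finset.sum_const, Nat.card_Ico]
          have : (M + 1) * K - M * K = K := by ring_nf; omega
          rw [this]; simp [nsmul_eq_mul]
        · intro i hi
          simp only [Finset.mem_Ico] at hi
          congr 2
          exact Nat.div_eq_of_lt_le hi.1 (by simpa [Nat.succ_mul] using hi.2)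
      have hMsucc : M.succ * K = (M + 1) * K := rfl
      rw [hMsucc, hblock]
      have h2 : (0:ℝ) < (2:ℝ)⁻¹ ^ (M+1) := by positivity
      calc ∑ i ∈ Finset.Ico 0 (M * K), ((2:ℝ)⁻¹) ^ (i / K + 1) + ↑K * (2:ℝ)⁻¹ ^ (M + 1)
          ≤ ↑K * (1 - (2:ℝ)⁻¹ ^ M) + ↑K * (2:ℝ)⁻¹ ^ (M + 1) := by linarith
        _ = ↑K * (1 - (2:ℝ)⁻¹ ^ (M+1)) := by ring_nf

private lemma arith_final (K : ℕ) (hK : 1 ≤ K) (N : ℕ) :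
    (∑ i ∈ Finset.range N, ((2:ℝ)⁻¹) ^ (i / K + 1)) ≤ K := by
  have h1 : (∑ i ∈ Finset.range N, ((2:ℝ)⁻¹) ^ (i / K + 1))
      ≤ ∑ i ∈ Finset.range (N * K), ((2:ℝ)⁻¹) ^ (i / K + 1) := by
    apply Finset.sum_le_sum_of_subset_of_nonneg
    · exact Finset.range_subset_range.mpr (Nat.le_mul_of_pos_right N hK)
    · intro i _ _; positivity
  have h2 := arith_block K hK N
  have h3 : (0:ℝ) ≤ (K:ℝ) * (2:ℝ)⁻¹ ^ N := by positivity
  nlinarith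

/-- Column bound: for each `b`, the total weight from all `a ∈ A` is at most `K`. -/
private lemma col_bound (hT : G.IsTree) {K : ℕ} (hK : 1 ≤ K) (A : Finset V) (b : V) :
    ∑ a ∈ A, wgt G v A K a b ≤ K := by
  classical
  have hc := hT.isConnected
  have hsum : ∑ a ∈ A, wgt G v A K a b
      = ∑ a ∈ A.filter (fun a => Cond G v A a b),
          ((2:ℝ)⁻¹) ^ ((G.dist a b - 1) / K + 1) := by
    rw [Finset.sum_filter]
    apply Finset.sum_congr rfl
    intro a _
    unfold wgt
    split <;> rfl
  rw [hsum]
  set S := A.filter (fun a => Cond G v A a b) with hS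
  have hinj : Set.InjOn (fun a => G.dist a b - 1) S := by
    intro a₁ h₁ a₂ h₂ he
    simp only [hS, Finset.coe_filter, Set.mem_setOf_eq] at h₁ h₂
    obtain ⟨-, hcond₁⟩ := h₁
    obtain ⟨-, hcond₂⟩ := h₂
    have hb₁ : Btw G v a₁ b := hcond₁.2.2.1
    have hb₂ : Btw G v a₂ b := hcond₂.2.2.1
    have hd₁ : 0 < G.dist a₁ b := hc.pos_dist_of_ne (Ne.symm hcond₁.2.2.2.1)
    have hd₂ : 0 < G.dist a₂ b := hc.pos_dist_of_ne (Ne.symm hcond₂.2.2.2.1)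
    have : G.dist a₁ b = G.dist a₂ b := by simp only at he; omega
    apply ancestor_eq hT hb₂ hb₁
    unfold Btw at hb₁ hb₂
    omega
  rw [← Finset.sum_image (f := fun t => ((2:ℝ)⁻¹) ^ (t / K + 1))
    (fun a ha a' ha' h => hinj ha ha' h)]
  set T := S.image (fun a => G.dist a b - 1) with hT'
  have hsub : T ⊆ Finset.range (T.sup id + 1) := by
    intro t ht
    simp only [Finset.mem_range]
    exact Nat.lt_succ_of_le (Finset.le_sup (f := id) ht)
  calc (∑ t ∈ T, ((2:ℝ)⁻¹) ^ (t / K + 1))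
      ≤ ∑ t ∈ Finset.range (T.sup id + 1), ((2:ℝ)⁻¹) ^ (t / K + 1) := by
        apply Finset.sum_le_sum_of_subset_of_nonneg hsub
        intro i _ _; positivity
    _ ≤ K := arith_final K hK _

open Classical in
/-- Row bound: each `a ∈ A` collects total weight at least `1/2`. -/
private lemma row_bound (hT : G.IsTree) {K : ℕ} (hK1 : 1 ≤ K)
    (hPR : KPseudoRegular G v K) (A : Finset V) (Bd : Finset V)
    (hBd : ∀ b : V, b ∈ vboundary G (A : Set V) → b ∈ Bd) :
    ∀ n : ℕ, ∀ a ∈ A, (A.filter (fun x => Btw G v a x)).card ≤ n →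
      (2:ℝ)⁻¹ ≤ ∑ b ∈ Bd, wgt G v A K a b := by
  classical
  have hc := hT.isConnected
  intro n
  induction n with
  | zero =>
      intro a ha hcard
      exfalso
      have haa : a ∈ A.filter (fun x => Btw G v a x) := by
        simp only [Finset.mem_filter]
        exact ⟨ha, by unfold Btw; simp [SimpleGraph.dist_self]⟩
      have := Finset.card_pos.mpr ⟨a, haa⟩
      omega
  | succ n ih =>
      intro a ha hcard
      by_cases hcase : ∃ b : V, Cond G v A a b ∧ G.dist a b ≤ K
      · -- an exit within distance K below a
        obtain ⟨b, hcond, hdK⟩ := hcase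
        have hd1 : 0 < G.dist a b := hc.pos_dist_of_ne (Ne.symm hcond.2.2.2.1)
        obtain ⟨p, hp, hpd⟩ := exists_parent hc hd1
        have hpA : p ∈ A := by
          apply hcond.2.2.2.2 p
          · unfold Btw
            have : G.dist p b = 1 := SimpleGraph.dist_eq_one_iff_adj.mpr hp
            omega
          · exact hp.ne
        have hbBd : b ∈ Bd := by
          apply hBd
          exact ⟨by simpa using hcond.2.1, p, by simpa using hpA, hp.symm⟩
        have hwb : wgt G v A K a b = (2:ℝ)⁻¹ := by
          unfold wgt
          rw [if_pos hcond]
          have : (G.dist a b - 1) / K = 0 := Nat.div_eq_of_lt (by omega)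
          rw [this]; norm_num
        calc (2:ℝ)⁻¹ = wgt G v A K a b := hwb.symm
          _ ≤ ∑ b ∈ Bd, wgt G v A K a b :=
              Finset.single_le_sum (f := fun b => wgt G v A K a b)
                (fun b _ => wgt_nonneg a b) hbBd
      · push_neg at hcase
        -- the whole subtree below `a` up to depth `K` is inside `A`
        have subA : ∀ j : ℕ, j ≤ K → ∀ x : V, Btw G v a x → G.dist a x = j → x ∈ A := by
          intro j
          induction j using Nat.strong_induction_on with
          | _ j ihj =>
            intro hjK x hbtw hdist
            by_cases hx : x ∈ A
            · exact hx
            exfalso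
            rcases Nat.eq_zero_or_pos j with h0 | hpos
            · subst h0
              have hxa : a = x := (hc.dist_eq_zero_iff).mp hdist
              exact hx (hxa ▸ ha)
            · have hcond : Cond G v A a x := by
                refine ⟨ha, hx, hbtw, ?_, ?_⟩
                · intro he
                  rw [he] at hdist
                  rw [SimpleGraph.dist_self] at hdist
                  omega
                · intro u hu hub
                  have hmid := btw_mid hc hbtw hu
                  have hdu : G.dist a u < j := by
                    unfold Btw at hu
                    have : 0 < G.dist u x := hc.pos_dist_of_ne hub
                    omega
                  exact ihj _ hdu (by omega) u hmid.1 rfl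
              have := hcase x hcond
              omega
        obtain ⟨y₁, y₂, hy12, hL1, hB1, hL2, hB2⟩ := hPR a
        have hd1 : G.dist a y₁ = K := by unfold Btw at hB1; omega
        have hd2 : G.dist a y₂ = K := by unfold Btw at hB2; omega
        have hy₁A : y₁ ∈ A := subA K le_rfl y₁ hB1 hd1
        have hy₂A : y₂ ∈ A := subA K le_rfl y₂ hB2 hd2
        -- the key transfer property
        have key : ∀ y : V, Btw G v a y → G.dist a y = K → ∀ b : V, Cond G v A y b →
            Cond G v A a b ∧ G.dist a b = K + G.dist y b := by
          intro y hay hdy b hcb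
          obtain ⟨hyA, hbA, hyb, hby, hseg⟩ := hcb
          have hab : Btw G v a b := btw_trans hc hay hyb
          constructor
          · refine ⟨ha, hbA, hab, fun he => hbA (he ▸ ha), ?_⟩
            intro u hu hub
            rcases seg_split hT hay hyb hu with h | h
            · have hmid := btw_mid hc hay h
              have hdu : G.dist a u ≤ K := by unfold Btw at h; omega
              exact subA _ hdu u hmid.1 rfl
            · exact hseg u h hub
          · unfold Btw at hab hay hyb
            omega
        -- distinct descendants have disjoint exit sets
        have hdisj : ∀ b : V, Cond G v A y₁ b → Cond G v A y₂ b → False := by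
          intro b hc1 hc2
          exact hy12 (ancestor_eq hT hc2.2.2.1 hc1.2.2.1 (by omega))
        -- pointwise comparison of weights
        have hpt : ∀ b : V, (2:ℝ)⁻¹ * (wgt G v A K y₁ b + wgt G v A K y₂ b)
            ≤ wgt G v A K a b := by
          intro b
          have htrans : ∀ y : V, Btw G v a y → G.dist a y = K → Cond G v A y b →
              wgt G v A K a b = (2:ℝ)⁻¹ * wgt G v A K y b := by
            intro y hay hdy hcy
            obtain ⟨hca, hdab⟩ := key y hay hdy b hcy
            unfold wgt
            rw [if_pos hca, if_pos hcy]
            have hdyb : 0 < G.dist y b := hc.pos_dist_of_ne (Ne.symm hcy.2.2.2.1)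
            have he : G.dist a b - 1 = (G.dist y b - 1) + K := by omega
            rw [he, Nat.add_div_right _ (by omega)]
            ring
          by_cases hc1 : Cond G v A y₁ b
          · have hw2 : wgt G v A K y₂ b = 0 := by
              unfold wgt
              rw [if_neg (fun h => hdisj b hc1 h)]
            rw [hw2, add_zero, ← htrans y₁ hB1 hd1 hc1]
          · by_cases hc2 : Cond G v A y₂ b
            · have hw1 : wgt G v A K y₁ b = 0 := by
                unfold wgt
                rw [if_neg hc1]
              rw [hw1, zero_add, ← htrans y₂ hB2 hd2 hc2]
            · have hw1 : wgt G v A K y₁ b = 0 := by unfold wgt; rw [if_neg hc1]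
              have hw2 : wgt G v A K y₂ b = 0 := by unfold wgt; rw [if_neg hc2]
              rw [hw1, hw2]
              simpa using wgt_nonneg (G := G) (v := v) (A := A) (K := K) a b
        -- the induction hypothesis applies to y₁ and y₂
        have hcard' : ∀ y : V, y ∈ A → Btw G v a y → G.dist v y = G.dist v a + K →
            (A.filter (fun x => Btw G v y x)).card ≤ n := by
          intro y hyA hay hLy
          have hss : A.filter (fun x => Btw G v y x) ⊂ A.filter (fun x => Btw G v a x) := by
            constructor
            · intro x hx
              simp only [Finset.mem_filter] at hx ⊢
              exact ⟨hx.1, btw_trans hc hay hx.2⟩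
            · intro hsub
              have ha' : a ∈ A.filter (fun x => Btw G v a x) := by
                simp only [Finset.mem_filter]
                exact ⟨ha, by unfold Btw; simp [SimpleGraph.dist_self]⟩
              have := hsub ha'
              simp only [Finset.mem_filter] at this
              have := this.2
              unfold Btw at this
              omega
          have := Finset.card_lt_card hss
          omega
        have ih1 := ih y₁ hy₁A (hcard' y₁ hy₁A hB1 hL1)
        have ih2 := ih y₂ hy₂A (hcard' y₂ hy₂A hB2 hL2)
        calc (2:ℝ)⁻¹ = 2⁻¹ * (2⁻¹ + 2⁻¹) := by norm_num
          _ ≤ 2⁻¹ * ((∑ b ∈ Bd, wgt G v A K y₁ b) + ∑ b ∈ Bd, wgt G v A K y₂ b) := by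
              apply mul_le_mul_of_nonneg_left (add_le_add ih1 ih2) (by norm_num)
          _ = ∑ b ∈ Bd, (2:ℝ)⁻¹ * (wgt G v A K y₁ b + wgt G v A K y₂ b) := by
              rw [← Finset.sum_add_distrib, Finset.mul_sum]
          _ ≤ ∑ b ∈ Bd, wgt G v A K a b := Finset.sum_le_sum (fun b _ => hpt b)

private lemma KPR_one_le (hc : G.Connected) {K : ℕ} (hPR : KPseudoRegular G v K) :
    1 ≤ K := by
  by_contra h
  have hK0 : K = 0 := by omega
  obtain ⟨y₁, y₂, hy12, h1, -, h2, -⟩ := hPR v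
  subst hK0
  rw [SimpleGraph.dist_self] at h1 h2
  have e1 : v = y₁ := (hc.dist_eq_zero_iff).mp (by omega)
  have e2 : v = y₂ := (hc.dist_eq_zero_iff).mp (by omega)
  exact hy12 (e1.symm.trans e2)

private lemma main_bound (hT : G.IsTree) {K : ℕ} (hK1 : 1 ≤ K)
    (hPR : KPseudoRegular G v K) :
    ((7 * K : ℕ) : ℝ≥0∞)⁻¹ ≤ cheeger G := by
  classical
  rw [cheeger]
  refine le_iInf fun A => le_iInf fun hA => ?_
  rw [eratio]
  by_cases hfin : (vboundary G (A : Set V)).Finite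
  · set Bd := hfin.toFinset with hBdDef
    have hBd : ∀ b : V, b ∈ vboundary G (A : Set V) → b ∈ Bd := by
      intro b hb; simpa [hBdDef] using hb
    -- the counting inequality over ℝ
    have hrow : ∀ a ∈ A, (2:ℝ)⁻¹ ≤ ∑ b ∈ Bd, wgt G v A K a b := by
      intro a ha
      exact row_bound hT hK1 hPR A Bd hBd A.card a ha (Finset.card_filter_le A _)
    have hcol : ∀ b ∈ Bd, ∑ a ∈ A, wgt G v A K a b ≤ (K:ℝ) :=
      fun b _ => col_bound hT hK1 A b
    have hreal : (A.card : ℝ) * 2⁻¹ ≤ (Bd.card : ℝ) * K := by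
      calc (A.card : ℝ) * 2⁻¹ = ∑ _a ∈ A, (2:ℝ)⁻¹ := by
            rw [Finset.sum_const, nsmul_eq_mul]
        _ ≤ ∑ a ∈ A, ∑ b ∈ Bd, wgt G v A K a b := Finset.sum_le_sum hrow
        _ = ∑ b ∈ Bd, ∑ a ∈ A, wgt G v A K a b := Finset.sum_comm
        _ ≤ ∑ _b ∈ Bd, (K:ℝ) := Finset.sum_le_sum hcol
        _ = (Bd.card : ℝ) * K := by rw [Finset.sum_const, nsmul_eq_mul]
    have hnat : A.card ≤ 7 * K * Bd.card := by
      have : (A.card : ℝ) ≤ ((7 * K * Bd.card : ℕ) : ℝ) := by push_cast; nlinarith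
      exact_mod_cast this
    -- conversion to ℝ≥0∞
    have henc : ((vboundary G (A : Set V)).encard : ℝ≥0∞) = (Bd.card : ℝ≥0∞) := by
      rw [hfin.encard_eq_coe_toFinset_card]
      simp [hBdDef]
    rw [henc]
    have hA0 : (A.card : ℝ≥0∞) ≠ 0 := by
      simpa using Finset.card_ne_zero_of_mem hA.choose_spec
    have hAtop : (A.card : ℝ≥0∞) ≠ ⊤ := ENNReal.natCast_ne_top _
    rw [ENNReal.le_div_iff_mul_le (Or.inl hA0) (Or.inl hAtop)]
    have h7K0 : ((7 * K : ℕ) : ℝ≥0∞) ≠ 0 := by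
      simp; omega
    have h7Kt : ((7 * K : ℕ) : ℝ≥0∞) ≠ ⊤ := ENNReal.natCast_ne_top _
    have hcast : (A.card : ℝ≥0∞) ≤ ((7 * K : ℕ) : ℝ≥0∞) * (Bd.card : ℝ≥0∞) := by
      rw [← Nat.cast_mul]
      exact_mod_cast hnat
    calc ((7 * K : ℕ) : ℝ≥0∞)⁻¹ * (A.card : ℝ≥0∞)
        ≤ ((7 * K : ℕ) : ℝ≥0∞)⁻¹ * (((7 * K : ℕ) : ℝ≥0∞) * (Bd.card : ℝ≥0∞)) :=
          mul_le_mul_right hcast _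
      _ = (Bd.card : ℝ≥0∞) := by
          rw [← mul_assoc, ENNReal.inv_mul_cancel h7K0 h7Kt, one_mul]
  · have : (vboundary G (A : Set V)).encard = ⊤ := Set.Infinite.encard_eq hfin
    rw [this]
    have hA0 : (A.card : ℝ≥0∞) ≠ 0 := by
      simpa using Finset.card_ne_zero_of_mem hA.choose_spec
    have hAtop : (A.card : ℝ≥0∞) ≠ ⊤ := ENNReal.natCast_ne_top _
    rw [ENNReal.div_eq_top.mpr (Or.inr ⟨by simp, hAtop⟩)]
    exact le_top

section Ray

variable {F : ℕ → V}

private lemma ray_level (hF : IsRay G v F) (i : ℕ) : G.dist v (F i) = i := by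
  have := hF.2 0 i
  rw [hF.1] at this
  rw [this, Nat.dist_zero_left]

private lemma ray_adj (hF : IsRay G v F) (i : ℕ) : G.Adj (F i) (F (i + 1)) := by
  apply SimpleGraph.dist_eq_one_iff_adj.mp
  rw [hF.2 i (i + 1), Nat.dist_eq_sub_of_le (Nat.le_succ i)]
  omega

private lemma ray_btw (hF : IsRay G v F) {i j : ℕ} (hij : i ≤ j) :
    Btw G v (F i) (F j) := by
  unfold Btw
  rw [ray_level hF, ray_level hF, hF.2 i j, Nat.dist_eq_sub_of_le hij]
  omega

/-- The slab construction: if pseudo-regularity fails at scale `n`, there is a chain of `n`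
vertices with at most two boundary vertices. -/
private lemma slab (hT : G.IsTree) (hgc : GeodComplete G v) {x₀ : V} (hx₀ : x₀ ≠ v)
    (n : ℕ) (hn : 1 ≤ n) (hbad : ¬ KPseudoRegular G v n) :
    ∃ A : Finset V, A.Nonempty ∧ A.card = n ∧ (vboundary G (A : Set V)).encard ≤ 2 := by
  classical
  have hc := hT.isConnected
  rw [KPseudoRegular] at hbad
  push_neg at hbad
  obtain ⟨a, ha⟩ := hbad
  obtain ⟨F, hF, m, hFm⟩ : ∃ F, IsRay G v F ∧ ∃ m, F m = a := by
    by_cases hav : a = v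
    · obtain ⟨F, hF, n₀, hFn⟩ := hgc x₀ hx₀
      exact ⟨F, hF, 0, by rw [hF.1, hav]⟩
    · exact hgc a hav
  have hma : G.dist v a = m := by rw [← hFm, ray_level hF]
  have hFinj : Function.Injective F := by
    intro i j hij
    have := hF.2 i j
    rw [hij, SimpleGraph.dist_self] at this
    have := this.symm
    rw [Nat.dist_eq_max_sub_min] at this
    omega
  refine ⟨(Finset.range n).image (fun i => F (m + i)), ?_, ?_, ?_⟩
  · exact ⟨F m, Finset.mem_image.mpr ⟨0, by simp; omega, by simp⟩⟩
  · rw [Finset.card_image_of_injective _ (fun i j h => by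
      have := hFinj h; omega), Finset.card_range]
  · set A := (Finset.range n).image (fun i => F (m + i)) with hA
    have hmem : ∀ z : V, z ∈ A ↔ ∃ i < n, F (m + i) = z := by
      intro z; simp [hA, Finset.mem_image]
    have hsub : vboundary G (A : Set V) ⊆ {F (m + n), F (m - 1)} := by
      rintro z ⟨hzA, a', ha'A, hadjz⟩
      simp only [Finset.mem_coe] at ha'A hzA
      obtain ⟨i, hi, ha'⟩ := (hmem a').mp ha'A
      subst ha'
      have hlevz := adj_levels hT v hadjz
      rw [ray_level hF] at hlevz
      rcases hlevz with hdown | hup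
      · -- z is the (unique) parent of F (m+i)
        have hmi : 1 ≤ m + i := by omega
        have hadj2 : G.Adj (F (m + i - 1)) (F (m + i)) := by
          have h' := ray_adj hF (m + i - 1)
          have he : m + i - 1 + 1 = m + i := by omega
          rw [he] at h'
          exact h'
        have hzpar : z = F (m + i - 1) :=
          parent_unique hT hadjz hadj2 (by rw [ray_level hF]; omega)
            (by rw [ray_level hF, ray_level hF]; omega)
        rcases Nat.lt_or_ge 0 i with h | h
        · exfalso
          apply hzA
          apply (hmem z).mpr ⟨i - 1, by omega, ?_⟩
          rw [hzpar]
          congr 1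
          omega
        · right
          have hi0 : i = 0 := by omega
          subst hi0
          simpa using hzpar
      · -- z is a child of F (m+i)
        by_cases hz' : z = F (m + i + 1)
        · rcases Nat.lt_or_ge (i + 1) n with h | h
          · exact absurd ((hmem z).mpr ⟨i + 1, h, by rw [hz']; exact congrArg F (by omega)⟩) hzA
          · left
            rw [hz']
            exact congrArg F (by omega)
        · exfalso
          have hzv : z ≠ v := by
            intro h; subst h
            rw [SimpleGraph.dist_self] at hup
            omega
          obtain ⟨F', hF', m', hF'm⟩ := hgc z hzv
          have hm' : m' = m + i + 1 := by
            have hz1 := ray_level hF' m'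
            rw [hF'm] at hz1
            omega
          have hbtwaz : Btw G v a z := by
            unfold Btw
            have t1 : G.dist a z ≤ G.dist a (F (m + i)) + G.dist (F (m + i)) z :=
              hc.dist_triangle
            have t2 : G.dist v z ≤ G.dist v a + G.dist a z := hc.dist_triangle
            have t3 : G.dist a (F (m + i)) = i := by
              rw [← hFm, hF.2, Nat.dist_eq_sub_of_le (by omega)]
              omega
            have t4 : G.dist (F (m + i)) z = 1 :=
              SimpleGraph.dist_eq_one_iff_adj.mpr hadjz.symm
            omega
          have hbtw1 : Btw G v a (F (m + n)) := by
            rw [← hFm]; exact ray_btw hF (by omega)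
          have hbtw2' : Btw G v z (F' (m + n)) := by
            rw [← hF'm]; exact ray_btw hF' (by omega)
          have hbtw2 : Btw G v a (F' (m + n)) := btw_trans hc hbtwaz hbtw2'
          have hne : F (m + n) ≠ F' (m + n) := by
            intro he
            apply hz'
            have h1 : Btw G v (F (m + i + 1)) (F (m + n)) := ray_btw hF (by omega)
            have h2 : Btw G v z (F (m + n)) := he ▸ hbtw2'
            exact ancestor_eq hT h1 h2 (by rw [ray_level hF]; omega)
          exact ha (F (m + n)) (F' (m + n)) hne
            (by rw [ray_level hF]; omega) hbtw1
            (by have := ray_level hF' (m + n); omega) hbtw2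
    calc (vboundary G (A : Set V)).encard ≤ ({F (m + n), F (m - 1)} : Set V).encard :=
          Set.encard_le_encard hsub
      _ ≤ 2 := by
          refine le_trans (Set.encard_insert_le _ _) ?_
          rw [Set.encard_singleton]
          norm_num

end Ray

/-- For a geodesically complete rooted tree `(T,v)`: `h(T) > 0` iff
`(T,v)` is pseudo-regular; moreover if `(T,v)` is `K`-pseudo-regular then `h(T) ≥ 1/(7K)`. -/
theorem cheeger_pos_iff_pseudoRegular (G : SimpleGraph V) (v : V) (hT : G.IsTree)
    (hgc : GeodComplete G v) :
    (0 < cheeger G ↔ ∃ K : ℕ, KPseudoRegular G v K) ∧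
      ∀ K : ℕ, KPseudoRegular G v K → ((7 * K : ℕ) : ℝ≥0∞)⁻¹ ≤ cheeger G := by
  classical
  have hc := hT.isConnected
  have main : ∀ K : ℕ, KPseudoRegular G v K → ((7 * K : ℕ) : ℝ≥0∞)⁻¹ ≤ cheeger G :=
    fun K hK => main_bound hT (KPR_one_le hc hK) hK
  refine ⟨⟨?_, ?_⟩, main⟩
  · intro h0
    by_contra hno
    push_neg at hno
    by_cases hV : ∀ x : V, x = v
    · -- the tree is a single point: the Cheeger constant is 0, contradiction
      have hb : vboundary G (({v} : Finset V) : Set V) = ∅ := by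
        ext w
        simp only [vboundary, Set.mem_setOf_eq, Set.mem_empty_iff_false, iff_false, not_and]
        intro hw
        exact absurd (by simpa using hV w) hw
      have hz : eratio G ({v} : Finset V) = 0 := by
        rw [eratio, hb]
        simp
      have hle : cheeger G ≤ 0 := by
        calc cheeger G ≤ eratio G {v} := iInf₂_le _ ⟨v, by simp⟩
          _ = 0 := hz
      rw [le_zero_iff.mp hle] at h0
      exact lt_irrefl _ h0
    · push_neg at hV
      obtain ⟨x₀, hx₀⟩ := hV
      obtain ⟨M, hM⟩ := ENNReal.exists_inv_nat_lt (ne_of_gt h0)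
      have hM1 : 1 ≤ M := by
        by_contra hM0
        have hM00 : M = 0 := by omega
        subst hM00
        rw [Nat.cast_zero, ENNReal.inv_zero] at hM
        exact not_top_lt hM
      obtain ⟨A, hAne, hAcard, hAenc⟩ := slab hT hgc hx₀ (2 * M) (by omega) (hno (2 * M))
      have h1 : cheeger G ≤ eratio G A := iInf₂_le A hAne
      have h2 : eratio G A ≤ (M : ℝ≥0∞)⁻¹ := by
        rw [eratio, hAcard]
        have hnum : ((vboundary G (A : Set V)).encard : ℝ≥0∞) ≤ 2 := by
          calc ((vboundary G (A : Set V)).encard : ℝ≥0∞) ≤ ((2 : ℕ∞) : ℝ≥0∞) :=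
                ENat.toENNReal_le.mpr hAenc
            _ = 2 := by norm_cast
        calc ((vboundary G (A : Set V)).encard : ℝ≥0∞) / ((2 * M : ℕ) : ℝ≥0∞)
            ≤ 2 / ((2 * M : ℕ) : ℝ≥0∞) := ENNReal.div_le_div_right hnum _
          _ = (M : ℝ≥0∞)⁻¹ := by
              rw [Nat.cast_mul]
              have : (2 : ℝ≥0∞) / ((2 : ℕ) * (M : ℕ) : ℝ≥0∞)
                  = (2 * 1) / (2 * (M : ℝ≥0∞)) := by norm_num
              rw [this, ENNReal.mul_div_mul_left _ _ (by norm_num) (by norm_num), one_div]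
      exact absurd hM (not_lt.mpr (h1.trans h2))
  · rintro ⟨K, hK⟩
    exact lt_of_lt_of_le (ENNReal.inv_pos.mpr (ENNReal.natCast_ne_top _)) (main K hK)


end Main

end TreePaper
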